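/- The following are equivalent: (i) m¹ is a reversible measure for q; (ii) m¹ is a †-reversible measure for q̂; (iii) m² is a †-reversible measure for Q. -/

import Mathlib

open MeasureTheory ProbabilityTheory Set Pointwise
open scoped ENNReal

noncomputable section

/-- The increasing affine map from `(-1,1)` onto the chord `E_u`. -/
def ellMap (γ u x : ℝ) : ℝ := -u * Real.cos γ + x * Real.sqrt (1 - u ^ 2 * Real.sin γ ^ 2)

/-- The inverse of `ellMap γ u`. -/
def ellInv (γ u y : ℝ) : ℝ := (y + u * Real.cos γ) / Real.sqrt (1 - u ^ 2 * Real.sin γ ^ 2)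

/-- The open elliptical region `E`. -/
def Eset (γ : ℝ) : Set (ℝ × ℝ) :=
  {p | p.1 ^ 2 + 2 * Real.cos γ * p.1 * p.2 + p.2 ^ 2 < 1}

/-- The state space `E* = E × {−1,1}`, realized inside `ℝ × ℝ × ℝ`. -/
def EstarSet (γ : ℝ) : Set (ℝ × ℝ × ℝ) :=
  {w | (w.1, w.2.1) ∈ Eset γ ∧ (w.2.2 = 1 ∨ w.2.2 = -1)}

/-- Uniform probability measure on `(-1,1)`. -/
def m1 : Measure ℝ := (2 : ℝ≥0∞)⁻¹ • volume.restrict (Ioo (-1 : ℝ) 1)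

/-- The probability measure `m²` on `E*`: normalized Lebesgue measure on `E` times
uniform measure on `{−1,1}`. -/
def m2 (γ : ℝ) : Measure (ℝ × ℝ × ℝ) :=
  ((((volume (Eset γ))⁻¹ • volume.restrict (Eset γ)).prod
      ((2 : ℝ≥0∞)⁻¹ • (Measure.dirac (1 : ℝ) + Measure.dirac (-1 : ℝ)))).map
    fun p => (p.1.1, p.1.2, p.2))

/-- `q` is a Markov kernel on `(-1,1)`. -/
def IsMarkovOnInterval (q : Kernel ℝ ℝ) : Prop :=
  IsMarkovKernel q ∧ ∀ x ∈ Ioo (-1 : ℝ) 1, q x (Ioo (-1 : ℝ) 1) = 1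

/-- The kernel `Q` of the alternating random walk, as a measure-valued function on the
state space. -/
def Qfun (γ : ℝ) (q : Kernel ℝ ℝ) : ℝ × ℝ × ℝ → Measure (ℝ × ℝ × ℝ) := fun w =>
  if w.2.2 = -1 then
    Measure.map (fun x => (ellMap γ w.2.1 x, w.2.1, (1 : ℝ))) (q (-ellInv γ w.2.1 w.1))
  else
    Measure.map (fun x => (w.1, ellMap γ w.1 x, (-1 : ℝ))) (q (-ellInv γ w.1 w.2.1))

/-- The kernel `Q†`. -/
def Qdag (γ : ℝ) (q : Kernel ℝ ℝ) : ℝ × ℝ × ℝ → Measure (ℝ × ℝ × ℝ) := fun w =>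
  if w.2.2 = 1 then
    Measure.map (fun x => (ellMap γ w.2.1 x, w.2.1, (-1 : ℝ)))
      ((q (ellInv γ w.2.1 w.1)).map (fun y => -y))
  else
    Measure.map (fun x => (w.1, ellMap γ w.1 x, (1 : ℝ)))
      ((q (ellInv γ w.1 w.2.1)).map (fun y => -y))

/-- Bounded continuous real-valued functions on a subset `S`. -/
def BddCtsOn {X : Type*} [TopologicalSpace X] (S : Set X) (f : X → ℝ) : Prop :=
  ContinuousOn f S ∧ ∃ C, ∀ x ∈ S, |f x| ≤ C

/-- `m¹` is a reversible measure for `q`. -/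
def Reversible1 (q : Kernel ℝ ℝ) : Prop :=
  ∀ j k : ℝ → ℝ, BddCtsOn (Ioo (-1 : ℝ) 1) j → BddCtsOn (Ioo (-1 : ℝ) 1) k →
    ∫ x, k x * ∫ y, j y ∂(q x) ∂m1 = ∫ x, j x * ∫ y, k y ∂(q x) ∂m1

/-- The `†`-operation on measure-valued functions on `(-1,1)`: `p†(x,A) := p(−x,−A)`. -/
def dag (p : ℝ → Measure ℝ) : ℝ → Measure ℝ := fun x => (p (-x)).map (fun y => -y)

/-- `m¹` is a `†`-reversible measure for `p`. -/
def DagReversible1 (p : ℝ → Measure ℝ) : Prop :=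
  ∀ j k : ℝ → ℝ, BddCtsOn (Ioo (-1 : ℝ) 1) j → BddCtsOn (Ioo (-1 : ℝ) 1) k →
    ∫ x, k x * ∫ y, j y ∂(p x) ∂m1 = ∫ x, j x * ∫ y, k y ∂(dag p x) ∂m1

/-- `m²` is a `†`-reversible measure for `Q`. -/
def DagReversible2 (γ : ℝ) (q : Kernel ℝ ℝ) : Prop :=
  ∀ f g : ℝ × ℝ × ℝ → ℝ, BddCtsOn (EstarSet γ) f → BddCtsOn (EstarSet γ) g →
    ∫ w, g w * ∫ w', f w' ∂(Qfun γ q w) ∂(m2 γ) =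
      ∫ w, f w * ∫ w', g w' ∂(Qdag γ q w) ∂(m2 γ)

/-- `μ` is an invariant measure for the transition function `p`. -/
def KInvariantMeasure {S : Type*} [MeasurableSpace S] (μ : Measure S) (p : S → Measure S) :
    Prop :=
  ∀ A : Set S, MeasurableSet A → ∫⁻ x, p x A ∂μ = μ A

/-- The set `A` is `(μ,p)`-invariant. -/
def KInvariantSet {S : Type*} [MeasurableSpace S] (μ : Measure S) (p : S → Measure S)
    (A : Set S) : Prop :=
  ∀ᵐ x ∂μ, x ∈ A → p x A = 1

/-- `μ` is an ergodic measure for the transition function `p`. -/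
def KErgodicMeasure {S : Type*} [MeasurableSpace S] (μ : Measure S) (p : S → Measure S) :
    Prop :=
  KInvariantMeasure μ p ∧
    ∀ A : Set S, MeasurableSet A → KInvariantSet μ p A → μ A = 0 ∨ μ A = 1

/-- The set `A` is `(μ,p)`-ergodic. -/
def KErgodicSet {S : Type*} [MeasurableSpace S] (μ : Measure S) (p : S → Measure S)
    (A : Set S) : Prop :=
  MeasurableSet A ∧ KInvariantSet μ p A ∧
    ∀ B : Set S, B ⊆ A → MeasurableSet B → KInvariantSet μ p B → μ B = 0 ∨ μ B = μ A

/-- `F⁺`: the slice of `F ⊆ E*` at `s = 1`. -/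
def Fplus (F : Set (ℝ × ℝ × ℝ)) : Set (ℝ × ℝ) := {p | (p.1, p.2, (1 : ℝ)) ∈ F}

/-- `F⁻`: the slice of `F ⊆ E*` at `s = −1`. -/
def Fminus (F : Set (ℝ × ℝ × ℝ)) : Set (ℝ × ℝ) := {p | (p.1, p.2, (-1 : ℝ)) ∈ F}

/-- `[G]^u ⊆ (−1,1)`. -/
def brU (γ : ℝ) (G : Set (ℝ × ℝ)) (u : ℝ) : Set ℝ :=
  {x | x ∈ Ioo (-1 : ℝ) 1 ∧ (u, ellMap γ u x) ∈ G}

/-- `[G]_v ⊆ (−1,1)`. -/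
def brV (γ : ℝ) (G : Set (ℝ × ℝ)) (v : ℝ) : Set ℝ :=
  {x | x ∈ Ioo (-1 : ℝ) 1 ∧ (ellMap γ v x, v) ∈ G}

/-- The map `T₀` on `E*`. -/
def T0 (γ : ℝ) (w : ℝ × ℝ × ℝ) : ℝ × ℝ × ℝ :=
  (-w.1 - 2 * w.2.1 * Real.cos γ, w.2.1, -w.2.2)

/-- The map `T₁` on `E*`. -/
def T1 (γ : ℝ) (w : ℝ × ℝ × ℝ) : ℝ × ℝ × ℝ :=
  (w.1, -w.2.1 - 2 * w.1 * Real.cos γ, -w.2.2)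

/-- The linear map `U_γ` taking `E` to the unit disk. -/
def Ugamma (γ : ℝ) (p : ℝ × ℝ) : ℝ × ℝ := (p.1 + p.2 * Real.cos γ, p.2 * Real.sin γ)

/-- `V(u,v,s) = s·|U_γ(u,v)|²`. -/
def Vfun (γ : ℝ) (w : ℝ × ℝ × ℝ) : ℝ :=
  w.2.2 * ((w.1 + w.2.1 * Real.cos γ) ^ 2 + (w.2.1 * Real.sin γ) ^ 2)
/-! ### Auxiliary lemmas -/

namespace RevAux

/-- `√(1 - u² sin² γ)`. -/
def sfn (γ u : ℝ) : ℝ := Real.sqrt (1 - u ^ 2 * Real.sin γ ^ 2)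

lemma ellMap_eq (γ u x : ℝ) : ellMap γ u x = -u * Real.cos γ + x * sfn γ u := rfl

variable {γ : ℝ}

lemma sin_pos (hγ : γ ∈ Ioo 0 Real.pi) : 0 < Real.sin γ :=
  Real.sin_pos_of_pos_of_lt_pi hγ.1 hγ.2

lemma Eset_open : IsOpen (Eset γ) := by
  have : Continuous fun p : ℝ × ℝ => p.1 ^ 2 + 2 * Real.cos γ * p.1 * p.2 + p.2 ^ 2 := by
    fun_prop
  exact isOpen_lt this continuous_const

lemma Eset_meas : MeasurableSet (Eset γ) := Eset_open.measurableSet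

lemma mem_Eset_iff {p : ℝ × ℝ} :
    p ∈ Eset γ ↔ p.1 ^ 2 * Real.sin γ ^ 2 + (p.2 + p.1 * Real.cos γ) ^ 2 < 1 := by
  have h := Real.sin_sq_add_cos_sq γ
  simp only [Eset, mem_setOf_eq]
  constructor <;> intro h' <;> nlinarith [h']

lemma good_of_mem {p : ℝ × ℝ} (hp : p ∈ Eset γ) : p.1 ^ 2 * Real.sin γ ^ 2 < 1 := by
  have := mem_Eset_iff.mp hp
  nlinarith [sq_nonneg (p.2 + p.1 * Real.cos γ)]

lemma swap_mem {p : ℝ × ℝ} : (p.2, p.1) ∈ Eset γ ↔ p ∈ Eset γ := by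
  simp only [Eset, mem_setOf_eq]
  constructor <;> intro h <;> nlinarith [h]

lemma sfn_nonneg (γ u : ℝ) : 0 ≤ sfn γ u := Real.sqrt_nonneg _

lemma sfn_pos {u : ℝ} (h : u ^ 2 * Real.sin γ ^ 2 < 1) : 0 < sfn γ u :=
  Real.sqrt_pos.mpr (by linarith)

lemma sfn_sq {u : ℝ} (h : u ^ 2 * Real.sin γ ^ 2 < 1) :
    sfn γ u ^ 2 = 1 - u ^ 2 * Real.sin γ ^ 2 :=
  Real.sq_sqrt (by linarith)

lemma sfn_eq_zero {u : ℝ} (h : ¬ u ^ 2 * Real.sin γ ^ 2 < 1) : sfn γ u = 0 :=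
  Real.sqrt_eq_zero'.mpr (by push_neg at h; linarith)

lemma sfn_def (u : ℝ) : Real.sqrt (1 - u ^ 2 * Real.sin γ ^ 2) = sfn γ u := rfl

lemma ellInv_mem {p : ℝ × ℝ} (hp : p ∈ Eset γ) : ellInv γ p.1 p.2 ∈ Ioo (-1 : ℝ) 1 := by
  have hg := good_of_mem hp
  have hS := sfn_pos hg
  have hS2 := sfn_sq hg
  have h2 : (p.2 + p.1 * Real.cos γ) ^ 2 < sfn γ p.1 ^ 2 := by
    rw [hS2]; have := mem_Eset_iff.mp hp; linarith
  obtain ⟨hgt, hlt⟩ := abs_lt_of_sq_lt_sq' h2 hS.le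
  rw [ellInv, sfn_def]
  constructor
  · rw [lt_div_iff₀ hS]; linarith
  · rw [div_lt_one hS]; exact hlt

lemma ellInv_ellMap {u : ℝ} (h : u ^ 2 * Real.sin γ ^ 2 < 1) (t : ℝ) :
    ellInv γ u (ellMap γ u t) = t := by
  have hS : sfn γ u ≠ 0 := (sfn_pos h).ne'
  rw [ellInv, ellMap_eq, sfn_def, show -u * Real.cos γ + t * sfn γ u + u * Real.cos γ = t * sfn γ u
    from by ring, mul_div_assoc, div_self (by exact hS), mul_one]

lemma ellMap_ellInv {u : ℝ} (h : u ^ 2 * Real.sin γ ^ 2 < 1) (v : ℝ) :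
    ellMap γ u (ellInv γ u v) = v := by
  have hS : sfn γ u ≠ 0 := (sfn_pos h).ne'
  rw [ellMap_eq, ellInv, sfn_def, div_mul_cancel₀ _ (by exact hS)]; ring

lemma ellMap_mem {u t : ℝ} (h : u ^ 2 * Real.sin γ ^ 2 < 1) (ht : t ∈ Ioo (-1 : ℝ) 1) :
    (u, ellMap γ u t) ∈ Eset γ := by
  have hS2 := sfn_sq h
  rw [mem_Eset_iff]
  have key : ((u, ellMap γ u t).2 + (u, ellMap γ u t).1 * Real.cos γ) ^ 2
      = t ^ 2 * (1 - u ^ 2 * Real.sin γ ^ 2) := by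
    show (ellMap γ u t + u * Real.cos γ) ^ 2 = _
    rw [ellMap_eq, show -u * Real.cos γ + t * sfn γ u + u * Real.cos γ = t * sfn γ u from by ring,
      mul_pow, hS2]
  rw [key]
  have ht2 : t ^ 2 < 1 := by nlinarith [ht.1, ht.2]
  nlinarith [mul_pos (by linarith : (0:ℝ) < 1 - t ^ 2) (by linarith : (0:ℝ) < 1 - u ^ 2 * Real.sin γ ^ 2)]

lemma Eset_subset (hγ : γ ∈ Ioo 0 Real.pi) :
    Eset γ ⊆ Ioo (-((Real.sin γ)⁻¹ + 1)) ((Real.sin γ)⁻¹ + 1) ×ˢ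
      Ioo (-((Real.sin γ)⁻¹ + 1)) ((Real.sin γ)⁻¹ + 1) := by
  intro p hp
  have hs := sin_pos hγ
  have hs' : Real.sin γ * (Real.sin γ)⁻¹ = 1 := mul_inv_cancel₀ hs.ne'
  have h1 := good_of_mem hp
  have h2 := good_of_mem (swap_mem.mpr hp)
  have hkey : ∀ x : ℝ, x ^ 2 * Real.sin γ ^ 2 < 1 →
      -((Real.sin γ)⁻¹ + 1) < x ∧ x < (Real.sin γ)⁻¹ + 1 := by
    intro x hx
    have hx2 : x ^ 2 < ((Real.sin γ)⁻¹ + 1) ^ 2 := by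
      have hinv : (0:ℝ) < (Real.sin γ)⁻¹ := inv_pos.mpr hs
      have h5 : x ^ 2 * Real.sin γ ^ 2 < (Real.sin γ * (Real.sin γ)⁻¹) ^ 2 := by
        rw [hs']; simpa using hx
      have h6 : x ^ 2 * Real.sin γ ^ 2 < Real.sin γ ^ 2 * (Real.sin γ)⁻¹ ^ 2 := by
        rw [← mul_pow]; nlinarith [h5]
      have h7 : x ^ 2 < (Real.sin γ)⁻¹ ^ 2 := by
        have := (mul_lt_mul_iff_left₀ (by positivity : (0:ℝ) < Real.sin γ ^ 2)).mp
          (by linarith [h6] : x ^ 2 * Real.sin γ ^ 2 < (Real.sin γ)⁻¹ ^ 2 * Real.sin γ ^ 2)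
        exact this
      nlinarith [h7, hinv]
    exact abs_lt_of_sq_lt_sq' hx2 (by positivity)
  exact ⟨hkey _ h1, hkey _ h2⟩

lemma volE_ne_top (hγ : γ ∈ Ioo 0 Real.pi) : volume (Eset γ) ≠ ⊤ := by
  refine ne_top_of_le_ne_top ?_ (measure_mono (Eset_subset hγ))
  rw [Measure.volume_eq_prod, Measure.prod_prod, Real.volume_Ioo]
  exact (ENNReal.mul_lt_top ENNReal.ofReal_lt_top ENNReal.ofReal_lt_top).ne

lemma volE_ne_zero (hγ : γ ∈ Ioo 0 Real.pi) : volume (Eset γ) ≠ 0 := by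
  have hsub : Ioo (-(2⁻¹:ℝ)) 2⁻¹ ×ˢ Ioo (-(2⁻¹:ℝ)) 2⁻¹ ⊆ Eset γ := by
    rintro ⟨u, v⟩ ⟨hu, hv⟩
    simp only [mem_Ioo] at hu hv
    have hc1 := Real.cos_le_one γ
    have hc2 := Real.neg_one_le_cos γ
    have e1 : (0:ℝ) ≤ (1 - Real.cos γ) * (u - v) ^ 2 := by nlinarith [sq_nonneg (u - v)]
    have e2 : (0:ℝ) ≤ (1 + Real.cos γ) * (u + v) ^ 2 := by nlinarith [sq_nonneg (u + v)]
    have e3 : (u + v) ^ 2 < 1 := by nlinarith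
    have e4 : (u - v) ^ 2 < 1 := by nlinarith
    show u ^ 2 + 2 * Real.cos γ * u * v + v ^ 2 < 1
    nlinarith [mul_le_mul_of_nonneg_left e3.le (by linarith : (0:ℝ) ≤ 1 + Real.cos γ),
      mul_le_mul_of_nonneg_left e4.le (by linarith : (0:ℝ) ≤ 1 - Real.cos γ)]
  intro h0
  have := measure_mono_null hsub h0
  rw [Measure.volume_eq_prod, Measure.prod_prod, Real.volume_Ioo] at this
  rw [mul_eq_zero] at this
  simp only [ENNReal.ofReal_eq_zero] at this
  have : (2⁻¹:ℝ) - -2⁻¹ ≤ 0 := by rcases this with h | h <;> linarith [h]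
  norm_num at this

/-! ### Integration helpers -/

lemma measurable_indicator_of_continuousOn {X : Type*} [TopologicalSpace X]
    [MeasurableSpace X] [OpensMeasurableSpace X] {s : Set X} (hs : IsOpen s)
    {f : X → ℝ} (hf : ContinuousOn f s) : Measurable (s.indicator f) := by
  have h1 : Continuous (s.restrict f) := continuousOn_iff_continuous_restrict.mp hf
  have he : MeasurableEmbedding ((↑) : s → X) :=
    MeasurableEmbedding.subtype_coe hs.measurableSet
  have h2 := he.measurable_extend h1.measurable (measurable_const (a := (0:ℝ)))
  convert h2 using 1
  funext x
  by_cases hx : x ∈ s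
  · rw [indicator_of_mem hx, Subtype.coe_injective.extend_apply _ _ ⟨x, hx⟩]; rfl
  · rw [indicator_of_notMem hx, Function.extend_apply']
    rintro ⟨⟨y, hy⟩, rfl⟩; exact hx hy

lemma setIoo_eq_intervalIntegral {a b : ℝ} (h : a ≤ b) (f : ℝ → ℝ) :
    ∫ x in Ioo a b, f x = ∫ x in a..b, f x := by
  rw [intervalIntegral.integral_of_le h, integral_Ioc_eq_integral_Ioo]

lemma int_Ioo_neg (h : ℝ → ℝ) :
    ∫ x in Ioo (-1 : ℝ) 1, h (-x) = ∫ x in Ioo (-1 : ℝ) 1, h x := by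
  rw [setIoo_eq_intervalIntegral (by norm_num), setIoo_eq_intervalIntegral (by norm_num),
    intervalIntegral.integral_comp_neg h]
  norm_num

lemma int_affine (a c : ℝ) (hc : 0 < c) (f : ℝ → ℝ) :
    ∫ v in Ioo (a - c) (a + c), f v = c * ∫ t in Ioo (-1 : ℝ) 1, f (a + t * c) := by
  rw [setIoo_eq_intervalIntegral (by linarith), setIoo_eq_intervalIntegral (by norm_num)]
  have h1 : (fun t : ℝ => f (a + t * c)) = fun t : ℝ => f (c * t + a) := by
    funext t; ring_nf
  rw [h1, intervalIntegral.integral_comp_mul_add f hc.ne' a,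
    show c * (-1 : ℝ) + a = a - c from by ring, show c * (1 : ℝ) + a = a + c from by ring,
    smul_eq_mul, ← mul_assoc, mul_inv_cancel₀ hc.ne', one_mul]

lemma integrable_of_bdd {α : Type*} [MeasurableSpace α] {μ : Measure α} [IsFiniteMeasure μ]
    {h : α → ℝ} (hm : AEStronglyMeasurable h μ) {C : ℝ} (hb : ∀ x, |h x| ≤ C) :
    Integrable h μ :=
  Integrable.mono' (integrable_const C) hm (ae_of_all _ fun x => by
    simpa [Real.norm_eq_abs] using hb x)

lemma isFiniteMeasure_restrictE (hγ : γ ∈ Ioo 0 Real.pi) :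
    IsFiniteMeasure ((volume : Measure (ℝ × ℝ)).restrict (Eset γ)) := by
  constructor
  rw [Measure.restrict_apply_univ]
  exact (volE_ne_top hγ).lt_top

/-- Slicing the integral over `E` along vertical chords. -/
lemma sliceU (hγ : γ ∈ Ioo 0 Real.pi) (φ : ℝ × ℝ → ℝ) (hm : Measurable φ) (C : ℝ)
    (hb : ∀ p, |φ p| ≤ C) :
    ∫ p in Eset γ, φ p =
      ∫ u, sfn γ u * ∫ t in Ioo (-1 : ℝ) 1, φ (u, ellMap γ u t) := by
  haveI := isFiniteMeasure_restrictE hγ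
  have hint : Integrable ((Eset γ).indicator φ) (volume : Measure (ℝ × ℝ)) := by
    rw [integrable_indicator_iff Eset_meas]
    exact integrable_of_bdd hm.aestronglyMeasurable hb
  rw [← integral_indicator Eset_meas]
  rw [Measure.volume_eq_prod] at hint ⊢
  rw [integral_prod _ hint]
  refine integral_congr_ae (Filter.Eventually.of_forall fun u => ?_)
  have hsec : ∀ v : ℝ, (Eset γ).indicator φ (u, v)
      = ({v : ℝ | (u, v) ∈ Eset γ}).indicator (fun v => φ (u, v)) v := by
    intro v
    by_cases hv : (u, v) ∈ Eset γ
    · rw [indicator_of_mem hv, indicator_of_mem (by exact hv)]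
    · rw [indicator_of_notMem hv, indicator_of_notMem (by exact hv)]
  simp only [hsec]
  have hsecmeas : MeasurableSet {v : ℝ | (u, v) ∈ Eset γ} :=
    measurable_prodMk_left Eset_meas
  rw [integral_indicator hsecmeas]
  by_cases hu : u ^ 2 * Real.sin γ ^ 2 < 1
  · have hS := sfn_pos hu
    have hS2 := sfn_sq hu
    have hset : {v : ℝ | (u, v) ∈ Eset γ}
        = Ioo (-u * Real.cos γ - sfn γ u) (-u * Real.cos γ + sfn γ u) := by
      ext v
      simp only [mem_setOf_eq, mem_Ioo, mem_Eset_iff]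
      constructor
      · intro hv
        have h2 : (v + u * Real.cos γ) ^ 2 < sfn γ u ^ 2 := by rw [hS2]; linarith [hv]
        obtain ⟨ha, hb'⟩ := abs_lt_of_sq_lt_sq' h2 hS.le
        constructor <;> linarith
      · intro ⟨ha, hb'⟩
        have h2 : (v + u * Real.cos γ) ^ 2 < sfn γ u ^ 2 := by
          nlinarith [ha, hb']
        rw [hS2] at h2; simpa using by linarith [h2]
    rw [hset, int_affine (-u * Real.cos γ) (sfn γ u) hS (fun v => φ (u, v))]
    rfl
  · have hS0 : sfn γ u = 0 := sfn_eq_zero hu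
    have hset : {v : ℝ | (u, v) ∈ Eset γ} = (∅ : Set ℝ) := by
      ext v
      simp only [mem_setOf_eq, mem_empty_iff_false, iff_false]
      intro hv
      exact hu (good_of_mem hv)
    rw [hset, hS0, zero_mul, Measure.restrict_empty, integral_zero_measure]

lemma Eset_swap_preimage : Prod.swap ⁻¹' Eset γ = Eset γ := by
  ext p
  simp only [mem_preimage, Prod.swap]
  exact swap_mem

/-- Slicing the integral over `E` along horizontal chords. -/
lemma sliceV (hγ : γ ∈ Ioo 0 Real.pi) (φ : ℝ × ℝ → ℝ) (hm : Measurable φ) (C : ℝ)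
    (hb : ∀ p, |φ p| ≤ C) :
    ∫ p in Eset γ, φ p =
      ∫ v, sfn γ v * ∫ t in Ioo (-1 : ℝ) 1, φ (ellMap γ v t, v) := by
  have key : ∫ p in Eset γ, φ p = ∫ p in Eset γ, (φ ∘ Prod.swap) p := by
    rw [← integral_indicator Eset_meas, ← integral_indicator Eset_meas]
    have h0 : (volume : Measure (ℝ × ℝ)) = Measure.map (⇑(MeasurableEquiv.prodComm (α := ℝ) (β := ℝ)))
        (volume : Measure (ℝ × ℝ)) := by
      rw [show ⇑(MeasurableEquiv.prodComm (α := ℝ) (β := ℝ)) = (Prod.swap : ℝ × ℝ → ℝ × ℝ) from rfl]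
      rw [Measure.volume_eq_prod, Measure.prod_swap, ← Measure.volume_eq_prod]
    conv_lhs => rw [h0]
    rw [integral_map_equiv]
    refine integral_congr_ae (Filter.Eventually.of_forall fun p => ?_)
    show (Eset γ).indicator φ (Prod.swap p) = (Eset γ).indicator (φ ∘ Prod.swap) p
    by_cases hp : p ∈ Eset γ
    · rw [indicator_of_mem (by rwa [← Eset_swap_preimage] at hp : Prod.swap p ∈ Eset γ),
        indicator_of_mem hp]
      rfl
    · rw [indicator_of_notMem (fun h => hp (by rwa [← Eset_swap_preimage] : p ∈ _)),
        indicator_of_notMem hp]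
  rw [key, sliceU hγ (φ ∘ Prod.swap) (hm.comp measurable_swap) C (fun p => hb _)]
  rfl

/-! ### Slice functions of bounded continuous functions on `E*` -/

/-- The `s = 1` slice, extended by zero. -/
def sl1 (γ : ℝ) (f : ℝ × ℝ × ℝ → ℝ) : ℝ × ℝ → ℝ :=
  (Eset γ).indicator fun p => f (p.1, p.2, 1)

/-- The `s = -1` slice, extended by zero. -/
def slm (γ : ℝ) (f : ℝ × ℝ × ℝ → ℝ) : ℝ × ℝ → ℝ :=
  (Eset γ).indicator fun p => f (p.1, p.2, -1)

/-- A globally measurable modification of `f`. -/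
def star (γ : ℝ) (f : ℝ × ℝ × ℝ → ℝ) : ℝ × ℝ × ℝ → ℝ := fun w =>
  if w.2.2 = (-1 : ℝ) then slm γ f (w.1, w.2.1) else sl1 γ f (w.1, w.2.1)

lemma mem_EstarSet_of {p : ℝ × ℝ} (hp : p ∈ Eset γ) {s : ℝ} (hs : s = 1 ∨ s = -1) :
    (p.1, p.2, s) ∈ EstarSet γ := ⟨hp, hs⟩

lemma measurable_sl1 {f : ℝ × ℝ × ℝ → ℝ} (hf : BddCtsOn (EstarSet γ) f) :
    Measurable (sl1 γ f) := by
  apply measurable_indicator_of_continuousOn Eset_open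
  refine hf.1.comp (by fun_prop : Continuous fun p : ℝ × ℝ => (p.1, p.2, (1:ℝ))).continuousOn
    fun p hp => ?_
  exact mem_EstarSet_of hp (Or.inl rfl)

lemma measurable_slm {f : ℝ × ℝ × ℝ → ℝ} (hf : BddCtsOn (EstarSet γ) f) :
    Measurable (slm γ f) := by
  apply measurable_indicator_of_continuousOn Eset_open
  refine hf.1.comp (by fun_prop : Continuous fun p : ℝ × ℝ => (p.1, p.2, (-1:ℝ))).continuousOn
    fun p hp => ?_
  exact mem_EstarSet_of hp (Or.inr rfl)

lemma measurable_star {f : ℝ × ℝ × ℝ → ℝ} (hf : BddCtsOn (EstarSet γ) f) :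
    Measurable (star γ f) := by
  apply Measurable.ite
  · exact (measurable_snd.comp measurable_snd) (measurableSet_singleton (-1 : ℝ))
  · exact (measurable_slm hf).comp (measurable_fst.prodMk (measurable_fst.comp measurable_snd))
  · exact (measurable_sl1 hf).comp (measurable_fst.prodMk (measurable_fst.comp measurable_snd))

lemma bound_sl1 {f : ℝ × ℝ × ℝ → ℝ} {C : ℝ} (hC : 0 ≤ C)
    (hb : ∀ w ∈ EstarSet γ, |f w| ≤ C) : ∀ p, |sl1 γ f p| ≤ C := by
  intro p
  by_cases hp : p ∈ Eset γ
  · rw [sl1, indicator_of_mem hp]; exact hb _ (mem_EstarSet_of hp (Or.inl rfl))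
  · rw [sl1, indicator_of_notMem hp]; simpa using hC

lemma bound_slm {f : ℝ × ℝ × ℝ → ℝ} {C : ℝ} (hC : 0 ≤ C)
    (hb : ∀ w ∈ EstarSet γ, |f w| ≤ C) : ∀ p, |slm γ f p| ≤ C := by
  intro p
  by_cases hp : p ∈ Eset γ
  · rw [slm, indicator_of_mem hp]; exact hb _ (mem_EstarSet_of hp (Or.inr rfl))
  · rw [slm, indicator_of_notMem hp]; simpa using hC

lemma star_eq_on {f : ℝ × ℝ × ℝ → ℝ} {w : ℝ × ℝ × ℝ} (hw : w ∈ EstarSet γ) :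
    star γ f w = f w := by
  obtain ⟨hE, hs | hs⟩ := hw
  · have h1 : w.2.2 ≠ (-1 : ℝ) := by rw [hs]; norm_num
    rw [star]
    simp only [h1, if_false]
    rw [sl1, indicator_of_mem hE]
    congr 1
    exact Prod.ext rfl (Prod.ext rfl hs.symm)
  · rw [star]
    simp only [hs, if_true]
    rw [slm, indicator_of_mem hE]
    congr 1
    exact Prod.ext rfl (Prod.ext rfl hs.symm)

lemma sl1_of_mem {f : ℝ × ℝ × ℝ → ℝ} {p : ℝ × ℝ} (hp : p ∈ Eset γ) :
    sl1 γ f p = f (p.1, p.2, 1) := indicator_of_mem hp _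

lemma slm_of_mem {f : ℝ × ℝ × ℝ → ℝ} {p : ℝ × ℝ} (hp : p ∈ Eset γ) :
    slm γ f p = f (p.1, p.2, -1) := indicator_of_mem hp _

/-! ### Measurability of kernel integrals -/

lemma measurable_ellMap : Measurable fun p : ℝ × ℝ => ellMap γ p.1 p.2 := by
  apply Measurable.add
  · fun_prop
  · exact measurable_snd.mul
      ((Real.continuous_sqrt.measurable).comp (by fun_prop))

lemma measurable_ellInv : Measurable fun p : ℝ × ℝ => ellInv γ p.1 p.2 := by
  apply Measurable.div
  · fun_prop
  · exact (Real.continuous_sqrt.measurable).comp (by fun_prop)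

lemma measurable_kint (q : Kernel ℝ ℝ) [IsSFiniteKernel q]
    {K : (ℝ × ℝ) × ℝ → ℝ} (hK : Measurable K) {r : ℝ × ℝ → ℝ} (hr : Measurable r) :
    Measurable fun p : ℝ × ℝ => ∫ x, K (p, x) ∂ q (r p) := by
  have h := MeasureTheory.StronglyMeasurable.integral_kernel_prod_right
    (κ := q.comap r hr) (f := fun p x => K (p, x)) hK.stronglyMeasurable
  have h2 : (fun p : ℝ × ℝ => ∫ x, K (p, x) ∂ q (r p))
      = fun p : ℝ × ℝ => ∫ x, K (p, x) ∂ (q.comap r hr) p := by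
    funext p; rw [Kernel.comap_apply]
  rw [h2]
  exact h.measurable

/-! ### Facts about the kernel `q` -/

lemma q_ae_Ioo {q : Kernel ℝ ℝ} (hq : IsMarkovOnInterval q) {r : ℝ}
    (hr : r ∈ Ioo (-1 : ℝ) 1) : ∀ᵐ x ∂ q r, x ∈ Ioo (-1 : ℝ) 1 := by
  haveI := hq.1
  have h1 : q r (Ioo (-1 : ℝ) 1)ᶜ = 0 := by
    rw [measure_compl measurableSet_Ioo (measure_ne_top _ _), hq.2 r hr, measure_univ,
      tsub_self]
  rw [MeasureTheory.ae_iff]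
  convert h1 using 2
  rfl

lemma kint_bound {q : Kernel ℝ ℝ} (hq : IsMarkovOnInterval q) {h : ℝ → ℝ} {C : ℝ}
    (hb : ∀ x, |h x| ≤ C) (r : ℝ) : |∫ x, h x ∂ q r| ≤ C := by
  haveI := hq.1
  have := MeasureTheory.norm_integral_le_of_norm_le_const (μ := q r) (f := h) (C := C)
    (ae_of_all _ fun x => by simpa [Real.norm_eq_abs] using hb x)
  simpa [Real.norm_eq_abs, measure_univ] using this

/-! ### The measure `m2` -/

/-- Normalized Lebesgue measure on `E`. -/
def nuE (γ : ℝ) : Measure (ℝ × ℝ) := (volume (Eset γ))⁻¹ • volume.restrict (Eset γ)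

/-- Uniform measure on `{1, -1}`. -/
def sig : Measure ℝ := (2 : ℝ≥0∞)⁻¹ • (Measure.dirac (1 : ℝ) + Measure.dirac (-1 : ℝ))

lemma m2_eq : m2 γ = Measure.map (⇑(MeasurableEquiv.prodAssoc : (ℝ × ℝ) × ℝ ≃ᵐ ℝ × ℝ × ℝ))
    ((nuE γ).prod sig) := rfl

lemma isFiniteMeasure_nuE (hγ : γ ∈ Ioo 0 Real.pi) : IsFiniteMeasure (nuE γ) := by
  constructor
  rw [nuE, Measure.smul_apply, Measure.restrict_apply_univ, smul_eq_mul,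
    ENNReal.inv_mul_cancel (volE_ne_zero hγ) (volE_ne_top hγ)]
  exact ENNReal.one_lt_top

instance : IsFiniteMeasure sig := by
  constructor
  rw [sig, Measure.smul_apply, smul_eq_mul]
  simp only [Measure.add_apply, measure_univ]
  have h1 : (2 : ℝ≥0∞)⁻¹ * (1 + 1) = 1 := by
    rw [show (1 + 1 : ℝ≥0∞) = 2 from by norm_num, ENNReal.inv_mul_cancel] <;> norm_num
  rw [h1]
  exact ENNReal.one_lt_top

lemma EstarSet_meas : MeasurableSet (EstarSet γ) := by
  have h : EstarSet γ = ((fun w : ℝ × ℝ × ℝ => (w.1, w.2.1)) ⁻¹' Eset γ) ∩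
      ((fun w : ℝ × ℝ × ℝ => w.2.2) ⁻¹' ({1} ∪ {-1})) := by
    ext w
    simp only [EstarSet, mem_setOf_eq, mem_inter_iff, mem_preimage, mem_union,
      mem_singleton_iff]
  rw [h]
  exact (((by fun_prop : Measurable fun w : ℝ × ℝ × ℝ => (w.1, w.2.1)) Eset_meas).inter
    ((by fun_prop : Measurable fun w : ℝ × ℝ × ℝ => w.2.2)
      ((measurableSet_singleton (1 : ℝ)).union (measurableSet_singleton (-1 : ℝ)))))

lemma measurable_assoc : Measurable fun p : (ℝ × ℝ) × ℝ => (p.1.1, p.1.2, p.2) := by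
  fun_prop

lemma m2_ae (hγ : γ ∈ Ioo 0 Real.pi) :
    ∀ᵐ w ∂ m2 γ, (w.1, w.2.1) ∈ Eset γ ∧ (w.2.2 = 1 ∨ w.2.2 = -1) := by
  rw [MeasureTheory.ae_iff]
  have hset : {w : ℝ × ℝ × ℝ | ¬ ((w.1, w.2.1) ∈ Eset γ ∧ (w.2.2 = 1 ∨ w.2.2 = -1))}
      = (EstarSet γ)ᶜ := rfl
  rw [hset, m2_eq, Measure.map_apply (MeasurableEquiv.measurable _) EstarSet_meas.compl]
  apply measure_mono_null (t := ((Eset γ)ᶜ ×ˢ (univ : Set ℝ)) ∪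
    ((univ : Set (ℝ × ℝ)) ×ˢ ({1} ∪ {-1} : Set ℝ)ᶜ))
  · rintro ⟨⟨u, v⟩, s⟩ hz
    simp only [mem_preimage, mem_compl_iff, EstarSet, mem_setOf_eq, not_and_or] at hz
    rcases hz with h | h
    · exact Or.inl ⟨h, mem_univ _⟩
    · refine Or.inr ⟨mem_univ _, ?_⟩
      simp only [mem_compl_iff, mem_union, mem_singleton_iff]
      tauto
  · apply measure_union_null
    · rw [Measure.prod_prod]
      have : nuE γ (Eset γ)ᶜ = 0 := by
        rw [nuE, Measure.smul_apply, Measure.restrict_apply Eset_meas.compl]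
        simp
      rw [this, zero_mul]
    · rw [Measure.prod_prod]
      have : sig ({1} ∪ {-1} : Set ℝ)ᶜ = 0 := by
        rw [sig, Measure.smul_apply, Measure.add_apply,
          Measure.dirac_apply' _ (((measurableSet_singleton (1:ℝ)).union
            (measurableSet_singleton (-1:ℝ))).compl),
          Measure.dirac_apply' _ (((measurableSet_singleton (1:ℝ)).union
            (measurableSet_singleton (-1:ℝ))).compl)]
        simp
      rw [this, mul_zero]

lemma integral_m2 (hγ : γ ∈ Ioo 0 Real.pi) (Hp Hm : ℝ × ℝ → ℝ)
    (hpm : Measurable Hp) (hmm : Measurable Hm) (C : ℝ)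
    (hbp : ∀ p, |Hp p| ≤ C) (hbm : ∀ p, |Hm p| ≤ C) :
    ∫ w, (if w.2.2 = (-1 : ℝ) then Hm (w.1, w.2.1) else Hp (w.1, w.2.1)) ∂ m2 γ
      = (volume (Eset γ)).toReal⁻¹ * 2⁻¹ *
        ((∫ p in Eset γ, Hp p) + ∫ p in Eset γ, Hm p) := by
  haveI := isFiniteMeasure_nuE hγ
  haveI := isFiniteMeasure_restrictE hγ
  have hCnn : 0 ≤ C := le_trans (abs_nonneg _) (hbp (0, 0))
  rw [m2_eq, integral_map_equiv]
  show ∫ z : (ℝ × ℝ) × ℝ, (if z.2 = (-1 : ℝ) then Hm z.1 else Hp z.1) ∂ ((nuE γ).prod sig)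
      = _
  have hmeas : Measurable fun z : (ℝ × ℝ) × ℝ => if z.2 = (-1 : ℝ) then Hm z.1 else Hp z.1 := by
    apply Measurable.ite
    · exact measurable_snd (measurableSet_singleton (-1 : ℝ))
    · exact hmm.comp measurable_fst
    · exact hpm.comp measurable_fst
  have hbd : ∀ z : (ℝ × ℝ) × ℝ, |if z.2 = (-1 : ℝ) then Hm z.1 else Hp z.1| ≤ C := by
    intro z
    by_cases h : z.2 = (-1 : ℝ)
    · rw [if_pos h]; exact hbm z.1
    · rw [if_neg h]; exact hbp z.1
  rw [integral_prod _ (integrable_of_bdd hmeas.aestronglyMeasurable hbd)]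
  have hinner : ∀ p : ℝ × ℝ, (∫ s, (if s = (-1 : ℝ) then Hm p else Hp p) ∂ sig)
      = 2⁻¹ * (Hp p + Hm p) := by
    intro p
    have hmeas1 : Measurable fun s : ℝ => if s = (-1 : ℝ) then Hm p else Hp p := by
      apply Measurable.ite (measurableSet_singleton (-1 : ℝ)) measurable_const
        measurable_const
    have hb1 : ∀ s : ℝ, |if s = (-1 : ℝ) then Hm p else Hp p| ≤ |Hm p| + |Hp p| := by
      intro s
      by_cases h : s = (-1 : ℝ)
      · rw [if_pos h]; linarith [abs_nonneg (Hp p)]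
      · rw [if_neg h]; linarith [abs_nonneg (Hm p)]
    rw [sig, integral_smul_measure, integral_add_measure
      (integrable_of_bdd hmeas1.aestronglyMeasurable hb1)
      (integrable_of_bdd hmeas1.aestronglyMeasurable hb1),
      integral_dirac, integral_dirac]
    norm_num
  simp only [hinner]
  rw [MeasureTheory.integral_const_mul]
  have hadd : ∫ p, (Hp p + Hm p) ∂ nuE γ = (∫ p, Hp p ∂ nuE γ) + ∫ p, Hm p ∂ nuE γ :=
    integral_add (integrable_of_bdd hpm.aestronglyMeasurable hbp)
      (integrable_of_bdd hmm.aestronglyMeasurable hbm)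
  rw [hadd]
  have hnu : ∀ H : ℝ × ℝ → ℝ, ∫ p, H p ∂ nuE γ
      = (volume (Eset γ)).toReal⁻¹ * ∫ p in Eset γ, H p := by
    intro H
    rw [nuE, integral_smul_measure, ENNReal.toReal_inv, smul_eq_mul]
  rw [hnu, hnu]
  ring

/-! ### More helpers -/

lemma neg_mem_Ioo {x : ℝ} (h : x ∈ Ioo (-1 : ℝ) 1) : -x ∈ Ioo (-1 : ℝ) 1 :=
  ⟨by linarith [h.2], by linarith [h.1]⟩

lemma q_null_compl {q : Kernel ℝ ℝ} (hq : IsMarkovOnInterval q) {r : ℝ}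
    (hr : r ∈ Ioo (-1 : ℝ) 1) : q r (Ioo (-1 : ℝ) 1)ᶜ = 0 := by
  haveI := hq.1
  rw [measure_compl measurableSet_Ioo (measure_ne_top _ _), hq.2 r hr, measure_univ, tsub_self]

lemma integral_star_congr {f : ℝ × ℝ × ℝ → ℝ} {μ : Measure (ℝ × ℝ × ℝ)}
    (h : μ (EstarSet γ)ᶜ = 0) :
    ∫ w', f w' ∂ μ = ∫ w', star γ f w' ∂ μ := by
  apply integral_congr_ae
  have hae : ∀ᵐ w' ∂ μ, w' ∈ EstarSet γ := by
    rw [MeasureTheory.ae_iff]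
    exact h
  filter_upwards [hae] with w' hw'
  exact (star_eq_on hw').symm

/-! ### The main computation for `Qfun` -/

lemma MAIN (hγ : γ ∈ Ioo 0 Real.pi) {q : Kernel ℝ ℝ} (hq : IsMarkovOnInterval q)
    {f g : ℝ × ℝ × ℝ → ℝ} (hf : BddCtsOn (EstarSet γ) f) (hg : BddCtsOn (EstarSet γ) g) :
    ∫ w, g w * ∫ w', f w' ∂ Qfun γ q w ∂ m2 γ
      = (volume (Eset γ)).toReal⁻¹ * 2⁻¹ *
        ((∫ u, sfn γ u * ∫ t in Ioo (-1 : ℝ) 1,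
            sl1 γ g (u, ellMap γ u t) * ∫ x, slm γ f (u, ellMap γ u x) ∂ q (-t)) +
         (∫ v, sfn γ v * ∫ t in Ioo (-1 : ℝ) 1,
            slm γ g (ellMap γ v t, v) * ∫ x, sl1 γ f (ellMap γ v x, v) ∂ q (-t))) := by
  haveI := hq.1
  obtain ⟨Cf0, hCf0⟩ := hf.2
  obtain ⟨Cg0, hCg0⟩ := hg.2
  set Cf := max Cf0 0 with hCfdef
  set Cg := max Cg0 0 with hCgdef
  have hCf : ∀ w ∈ EstarSet γ, |f w| ≤ Cf := fun w hw => le_trans (hCf0 w hw) (le_max_left _ _)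
  have hCg : ∀ w ∈ EstarSet γ, |g w| ≤ Cg := fun w hw => le_trans (hCg0 w hw) (le_max_left _ _)
  have hCfnn : 0 ≤ Cf := le_max_right _ _
  have hCgnn : 0 ≤ Cg := le_max_right _ _
  set Fp : ℝ × ℝ → ℝ :=
    fun p => ∫ x, slm γ f (p.1, ellMap γ p.1 x) ∂ q (-(ellInv γ p.1 p.2)) with hFpdef
  set Fm : ℝ × ℝ → ℝ :=
    fun p => ∫ x, sl1 γ f (ellMap γ p.2 x, p.2) ∂ q (-(ellInv γ p.2 p.1)) with hFmdef
  set Hp : ℝ × ℝ → ℝ := fun p => sl1 γ g p * Fp p with hHpdef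
  set Hm : ℝ × ℝ → ℝ := fun p => slm γ g p * Fm p with hHmdef
  -- measurability
  have hFpm : Measurable Fp := by
    apply measurable_kint q (K := fun z : (ℝ × ℝ) × ℝ => slm γ f (z.1.1, ellMap γ z.1.1 z.2))
      (r := fun p : ℝ × ℝ => -(ellInv γ p.1 p.2))
    · exact (measurable_slm hf).comp ((measurable_fst.comp measurable_fst).prodMk
        (measurable_ellMap.comp ((measurable_fst.comp measurable_fst).prodMk measurable_snd)))
    · exact measurable_ellInv.neg
  have hFmm : Measurable Fm := by
    apply measurable_kint q (K := fun z : (ℝ × ℝ) × ℝ => sl1 γ f (ellMap γ z.1.2 z.2, z.1.2))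
      (r := fun p : ℝ × ℝ => -(ellInv γ p.2 p.1))
    · exact (measurable_sl1 hf).comp
        ((measurable_ellMap.comp ((measurable_snd.comp measurable_fst).prodMk
          measurable_snd)).prodMk (measurable_snd.comp measurable_fst))
    · exact (measurable_ellInv.comp (measurable_snd.prodMk measurable_fst)).neg
  -- bounds
  have hFpb : ∀ p, |Fp p| ≤ Cf := fun p =>
    kint_bound hq (fun x => bound_slm hCfnn hCf (p.1, ellMap γ p.1 x)) _
  have hFmb : ∀ p, |Fm p| ≤ Cf := fun p =>
    kint_bound hq (fun x => bound_sl1 hCfnn hCf (ellMap γ p.2 x, p.2)) _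
  have hHpm : Measurable Hp := (measurable_sl1 hg).mul hFpm
  have hHmm : Measurable Hm := (measurable_slm hg).mul hFmm
  have hHpb : ∀ p, |Hp p| ≤ Cg * Cf := by
    intro p
    rw [hHpdef, abs_mul]
    exact mul_le_mul (bound_sl1 hCgnn hCg p) (hFpb p) (abs_nonneg _) hCgnn
  have hHmb : ∀ p, |Hm p| ≤ Cg * Cf := by
    intro p
    rw [hHmdef, abs_mul]
    exact mul_le_mul (bound_slm hCgnn hCg p) (hFmb p) (abs_nonneg _) hCgnn
  -- a.e. identification of the integrand
  have key : ∀ᵐ w ∂ m2 γ, g w * (∫ w', f w' ∂ Qfun γ q w)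
      = (if w.2.2 = (-1 : ℝ) then Hm (w.1, w.2.1) else Hp (w.1, w.2.1)) := by
    filter_upwards [m2_ae hγ] with w hw
    rcases w with ⟨u, v, s⟩
    obtain ⟨hE, hs | hs⟩ := hw
    · -- s = 1
      subst hs
      rw [if_neg (by norm_num : ¬ ((1 : ℝ) = -1))]
      have hQ : Qfun γ q (u, v, 1)
          = Measure.map (fun x => (u, ellMap γ u x, (-1 : ℝ))) (q (-ellInv γ u v)) := by
        simp only [Qfun]
        norm_num
      have hr : -ellInv γ u v ∈ Ioo (-1 : ℝ) 1 := neg_mem_Ioo (ellInv_mem hE)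
      have hΦm : Measurable fun x : ℝ => (u, ellMap γ u x, (-1 : ℝ)) :=
        measurable_const.prodMk ((measurable_ellMap.comp
          (measurable_const.prodMk measurable_id)).prodMk measurable_const)
      have hnull : (Measure.map (fun x : ℝ => (u, ellMap γ u x, (-1 : ℝ)))
          (q (-ellInv γ u v))) (EstarSet γ)ᶜ = 0 := by
        rw [Measure.map_apply hΦm EstarSet_meas.compl]
        apply measure_mono_null (t := (Ioo (-1 : ℝ) 1)ᶜ)
        · intro x hx
          simp only [mem_preimage, mem_compl_iff] at hx ⊢
          intro hxIoo
          exact hx (mem_EstarSet_of (ellMap_mem (good_of_mem hE) hxIoo) (Or.inr rfl))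
        · exact q_null_compl hq hr
      rw [hQ, integral_star_congr hnull,
        integral_map hΦm.aemeasurable (measurable_star hf).aestronglyMeasurable]
      have hstar : ∀ x : ℝ, star γ f (u, ellMap γ u x, (-1 : ℝ))
          = slm γ f (u, ellMap γ u x) := by
        intro x
        simp [star]
      simp only [hstar]
      rw [hHpdef]
      show g (u, v, 1) * Fp (u, v) = sl1 γ g (u, v) * Fp (u, v)
      rw [sl1_of_mem hE]
    · -- s = -1
      subst hs
      rw [if_pos rfl]
      have hE' : ((v, u) : ℝ × ℝ) ∈ Eset γ := swap_mem.mpr hE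
      have hQ : Qfun γ q (u, v, -1)
          = Measure.map (fun x => (ellMap γ v x, v, (1 : ℝ))) (q (-ellInv γ v u)) := by
        simp only [Qfun]
        norm_num
      have hr : -ellInv γ v u ∈ Ioo (-1 : ℝ) 1 := neg_mem_Ioo (ellInv_mem hE')
      have hΦm : Measurable fun x : ℝ => (ellMap γ v x, v, (1 : ℝ)) :=
        ((measurable_ellMap.comp (measurable_const.prodMk measurable_id))).prodMk
          measurable_const
      have hnull : (Measure.map (fun x : ℝ => (ellMap γ v x, v, (1 : ℝ)))
          (q (-ellInv γ v u))) (EstarSet γ)ᶜ = 0 := by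
        rw [Measure.map_apply hΦm EstarSet_meas.compl]
        apply measure_mono_null (t := (Ioo (-1 : ℝ) 1)ᶜ)
        · intro x hx
          simp only [mem_preimage, mem_compl_iff] at hx ⊢
          intro hxIoo
          refine hx (mem_EstarSet_of (p := (ellMap γ v x, v)) ?_ (Or.inl rfl))
          exact swap_mem.mp (by exact ellMap_mem (good_of_mem hE') hxIoo)
        · exact q_null_compl hq hr
      rw [hQ, integral_star_congr hnull,
        integral_map hΦm.aemeasurable (measurable_star hf).aestronglyMeasurable]
      have hstar : ∀ x : ℝ, star γ f (ellMap γ v x, v, (1 : ℝ))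
          = sl1 γ f (ellMap γ v x, v) := by
        intro x
        simp only [star]
        norm_num
      simp only [hstar]
      rw [hHmdef]
      show g (u, v, -1) * Fm (u, v) = slm γ g (u, v) * Fm (u, v)
      rw [slm_of_mem hE]
  rw [integral_congr_ae key, integral_m2 hγ Hp Hm hHpm hHmm (Cg * Cf) hHpb hHmb]
  congr 1
  congr 1
  · -- the Hp integral, sliced along vertical chords
    rw [sliceU hγ Hp hHpm (Cg * Cf) hHpb]
    refine integral_congr_ae (Filter.Eventually.of_forall fun u => ?_)
    show sfn γ u * (∫ t in Ioo (-1 : ℝ) 1, Hp (u, ellMap γ u t))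
        = sfn γ u * ∫ t in Ioo (-1 : ℝ) 1,
            sl1 γ g (u, ellMap γ u t) * ∫ x, slm γ f (u, ellMap γ u x) ∂ q (-t)
    by_cases hu : u ^ 2 * Real.sin γ ^ 2 < 1
    · congr 1
      refine setIntegral_congr_fun measurableSet_Ioo fun t _ => ?_
      show sl1 γ g (u, ellMap γ u t) *
          (∫ x, slm γ f (u, ellMap γ u x) ∂ q (-(ellInv γ u (ellMap γ u t)))) = _
      rw [ellInv_ellMap hu]
    · rw [sfn_eq_zero hu, zero_mul, zero_mul]
  · -- the Hm integral, sliced along horizontal chords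
    rw [sliceV hγ Hm hHmm (Cg * Cf) hHmb]
    refine integral_congr_ae (Filter.Eventually.of_forall fun v => ?_)
    show sfn γ v * (∫ t in Ioo (-1 : ℝ) 1, Hm (ellMap γ v t, v))
        = sfn γ v * ∫ t in Ioo (-1 : ℝ) 1,
            slm γ g (ellMap γ v t, v) * ∫ x, sl1 γ f (ellMap γ v x, v) ∂ q (-t)
    by_cases hv : v ^ 2 * Real.sin γ ^ 2 < 1
    · congr 1
      refine setIntegral_congr_fun measurableSet_Ioo fun t _ => ?_
      show slm γ g (ellMap γ v t, v) *
          (∫ x, sl1 γ f (ellMap γ v x, v) ∂ q (-(ellInv γ v (ellMap γ v t)))) = _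
      rw [ellInv_ellMap hv]
    · rw [sfn_eq_zero hv, zero_mul, zero_mul]

/-! ### The main computation for `Qdag` -/

lemma MAINdag (hγ : γ ∈ Ioo 0 Real.pi) {q : Kernel ℝ ℝ} (hq : IsMarkovOnInterval q)
    {f g : ℝ × ℝ × ℝ → ℝ} (hf : BddCtsOn (EstarSet γ) f) (hg : BddCtsOn (EstarSet γ) g) :
    ∫ w, f w * ∫ w', g w' ∂ Qdag γ q w ∂ m2 γ
      = (volume (Eset γ)).toReal⁻¹ * 2⁻¹ *
        ((∫ v, sfn γ v * ∫ t in Ioo (-1 : ℝ) 1,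
            sl1 γ f (ellMap γ v t, v) * ∫ x, slm γ g (ellMap γ v (-x), v) ∂ q t) +
         (∫ u, sfn γ u * ∫ t in Ioo (-1 : ℝ) 1,
            slm γ f (u, ellMap γ u t) * ∫ x, sl1 γ g (u, ellMap γ u (-x)) ∂ q t)) := by
  haveI := hq.1
  obtain ⟨Cf0, hCf0⟩ := hf.2
  obtain ⟨Cg0, hCg0⟩ := hg.2
  set Cf := max Cf0 0 with hCfdef
  set Cg := max Cg0 0 with hCgdef
  have hCf : ∀ w ∈ EstarSet γ, |f w| ≤ Cf := fun w hw => le_trans (hCf0 w hw) (le_max_left _ _)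
  have hCg : ∀ w ∈ EstarSet γ, |g w| ≤ Cg := fun w hw => le_trans (hCg0 w hw) (le_max_left _ _)
  have hCfnn : 0 ≤ Cf := le_max_right _ _
  have hCgnn : 0 ≤ Cg := le_max_right _ _
  set Gp : ℝ × ℝ → ℝ :=
    fun p => ∫ x, slm γ g (ellMap γ p.2 (-x), p.2) ∂ q (ellInv γ p.2 p.1) with hGpdef
  set Gm : ℝ × ℝ → ℝ :=
    fun p => ∫ x, sl1 γ g (p.1, ellMap γ p.1 (-x)) ∂ q (ellInv γ p.1 p.2) with hGmdef
  set Hp : ℝ × ℝ → ℝ := fun p => sl1 γ f p * Gp p with hHpdef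
  set Hm : ℝ × ℝ → ℝ := fun p => slm γ f p * Gm p with hHmdef
  -- measurability
  have hGpm : Measurable Gp := by
    apply measurable_kint q
      (K := fun z : (ℝ × ℝ) × ℝ => slm γ g (ellMap γ z.1.2 (-z.2), z.1.2))
      (r := fun p : ℝ × ℝ => ellInv γ p.2 p.1)
    · exact (measurable_slm hg).comp
        ((measurable_ellMap.comp ((measurable_snd.comp measurable_fst).prodMk
          measurable_snd.neg)).prodMk (measurable_snd.comp measurable_fst))
    · exact measurable_ellInv.comp (measurable_snd.prodMk measurable_fst)
  have hGmm : Measurable Gm := by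
    apply measurable_kint q
      (K := fun z : (ℝ × ℝ) × ℝ => sl1 γ g (z.1.1, ellMap γ z.1.1 (-z.2)))
      (r := fun p : ℝ × ℝ => ellInv γ p.1 p.2)
    · exact (measurable_sl1 hg).comp ((measurable_fst.comp measurable_fst).prodMk
        (measurable_ellMap.comp ((measurable_fst.comp measurable_fst).prodMk
          measurable_snd.neg)))
    · exact measurable_ellInv
  -- bounds
  have hGpb : ∀ p, |Gp p| ≤ Cg := fun p =>
    kint_bound hq (fun x => bound_slm hCgnn hCg (ellMap γ p.2 (-x), p.2)) _
  have hGmb : ∀ p, |Gm p| ≤ Cg := fun p =>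
    kint_bound hq (fun x => bound_sl1 hCgnn hCg (p.1, ellMap γ p.1 (-x))) _
  have hHpm : Measurable Hp := (measurable_sl1 hf).mul hGpm
  have hHmm : Measurable Hm := (measurable_slm hf).mul hGmm
  have hHpb : ∀ p, |Hp p| ≤ Cf * Cg := by
    intro p
    rw [hHpdef, abs_mul]
    exact mul_le_mul (bound_sl1 hCfnn hCf p) (hGpb p) (abs_nonneg _) hCfnn
  have hHmb : ∀ p, |Hm p| ≤ Cf * Cg := by
    intro p
    rw [hHmdef, abs_mul]
    exact mul_le_mul (bound_slm hCfnn hCf p) (hGmb p) (abs_nonneg _) hCfnn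
  -- a.e. identification of the integrand
  have key : ∀ᵐ w ∂ m2 γ, f w * (∫ w', g w' ∂ Qdag γ q w)
      = (if w.2.2 = (-1 : ℝ) then Hm (w.1, w.2.1) else Hp (w.1, w.2.1)) := by
    filter_upwards [m2_ae hγ] with w hw
    rcases w with ⟨u, v, s⟩
    obtain ⟨hE, hs | hs⟩ := hw
    · -- s = 1
      subst hs
      rw [if_neg (by norm_num : ¬ ((1 : ℝ) = -1))]
      have hE' : ((v, u) : ℝ × ℝ) ∈ Eset γ := swap_mem.mpr hE
      have hQ : Qdag γ q (u, v, 1)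
          = Measure.map (fun x => (ellMap γ v x, v, (-1 : ℝ)))
              ((q (ellInv γ v u)).map fun y => -y) := by
        simp only [Qdag]
        norm_num
      have hr : ellInv γ v u ∈ Ioo (-1 : ℝ) 1 := ellInv_mem hE'
      have hΦm : Measurable fun x : ℝ => (ellMap γ v x, v, (-1 : ℝ)) :=
        ((measurable_ellMap.comp (measurable_const.prodMk measurable_id))).prodMk
          measurable_const
      rw [hQ, Measure.map_map hΦm measurable_neg]
      have hcm : Measurable ((fun x : ℝ => (ellMap γ v x, v, (-1 : ℝ))) ∘ fun y : ℝ => -y) :=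
        hΦm.comp measurable_neg
      have hnull : (Measure.map ((fun x : ℝ => (ellMap γ v x, v, (-1 : ℝ))) ∘ fun y : ℝ => -y)
          (q (ellInv γ v u))) (EstarSet γ)ᶜ = 0 := by
        rw [Measure.map_apply hcm EstarSet_meas.compl]
        apply measure_mono_null (t := (Ioo (-1 : ℝ) 1)ᶜ)
        · intro x hx
          simp only [mem_preimage, mem_compl_iff, Function.comp_apply] at hx ⊢
          intro hxIoo
          refine hx (mem_EstarSet_of (p := (ellMap γ v (-x), v)) ?_ (Or.inr rfl))
          exact swap_mem.mp (by exact ellMap_mem (good_of_mem hE') (neg_mem_Ioo hxIoo))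
        · exact q_null_compl hq hr
      rw [integral_star_congr hnull,
        integral_map hcm.aemeasurable (measurable_star hg).aestronglyMeasurable]
      have hstar : ∀ x : ℝ, star γ g (ellMap γ v (-x), v, (-1 : ℝ))
          = slm γ g (ellMap γ v (-x), v) := by
        intro x
        simp [star]
      simp only [Function.comp_apply, hstar]
      rw [hHpdef]
      show f (u, v, 1) * Gp (u, v) = sl1 γ f (u, v) * Gp (u, v)
      rw [sl1_of_mem hE]
    · -- s = -1
      subst hs
      rw [if_pos rfl]
      have hQ : Qdag γ q (u, v, -1)
          = Measure.map (fun x => (u, ellMap γ u x, (1 : ℝ)))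
              ((q (ellInv γ u v)).map fun y => -y) := by
        simp only [Qdag]
        norm_num
      have hr : ellInv γ u v ∈ Ioo (-1 : ℝ) 1 := ellInv_mem hE
      have hΦm : Measurable fun x : ℝ => (u, ellMap γ u x, (1 : ℝ)) :=
        measurable_const.prodMk ((measurable_ellMap.comp
          (measurable_const.prodMk measurable_id)).prodMk measurable_const)
      rw [hQ, Measure.map_map hΦm measurable_neg]
      have hcm : Measurable ((fun x : ℝ => (u, ellMap γ u x, (1 : ℝ))) ∘ fun y : ℝ => -y) :=
        hΦm.comp measurable_neg
      have hnull : (Measure.map ((fun x : ℝ => (u, ellMap γ u x, (1 : ℝ))) ∘ fun y : ℝ => -y)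
          (q (ellInv γ u v))) (EstarSet γ)ᶜ = 0 := by
        rw [Measure.map_apply hcm EstarSet_meas.compl]
        apply measure_mono_null (t := (Ioo (-1 : ℝ) 1)ᶜ)
        · intro x hx
          simp only [mem_preimage, mem_compl_iff, Function.comp_apply] at hx ⊢
          intro hxIoo
          exact hx (mem_EstarSet_of (ellMap_mem (good_of_mem hE) (neg_mem_Ioo hxIoo))
            (Or.inl rfl))
        · exact q_null_compl hq hr
      rw [integral_star_congr hnull,
        integral_map hcm.aemeasurable (measurable_star hg).aestronglyMeasurable]
      have hstar : ∀ x : ℝ, star γ g (u, ellMap γ u (-x), (1 : ℝ))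
          = sl1 γ g (u, ellMap γ u (-x)) := by
        intro x
        simp only [star]
        norm_num
      simp only [Function.comp_apply, hstar]
      rw [hHmdef]
      show f (u, v, -1) * Gm (u, v) = slm γ f (u, v) * Gm (u, v)
      rw [slm_of_mem hE]
  rw [integral_congr_ae key, integral_m2 hγ Hp Hm hHpm hHmm (Cf * Cg) hHpb hHmb]
  congr 1
  congr 1
  · -- the Hp integral, sliced along horizontal chords
    rw [sliceV hγ Hp hHpm (Cf * Cg) hHpb]
    refine integral_congr_ae (Filter.Eventually.of_forall fun v => ?_)
    show sfn γ v * (∫ t in Ioo (-1 : ℝ) 1, Hp (ellMap γ v t, v))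
        = sfn γ v * ∫ t in Ioo (-1 : ℝ) 1,
            sl1 γ f (ellMap γ v t, v) * ∫ x, slm γ g (ellMap γ v (-x), v) ∂ q t
    by_cases hv : v ^ 2 * Real.sin γ ^ 2 < 1
    · congr 1
      refine setIntegral_congr_fun measurableSet_Ioo fun t _ => ?_
      show sl1 γ f (ellMap γ v t, v) *
          (∫ x, slm γ g (ellMap γ v (-x), v) ∂ q (ellInv γ v (ellMap γ v t))) = _
      rw [ellInv_ellMap hv]
    · rw [sfn_eq_zero hv, zero_mul, zero_mul]
  · -- the Hm integral, sliced along vertical chords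
    rw [sliceU hγ Hm hHmm (Cf * Cg) hHmb]
    refine integral_congr_ae (Filter.Eventually.of_forall fun u => ?_)
    show sfn γ u * (∫ t in Ioo (-1 : ℝ) 1, Hm (u, ellMap γ u t))
        = sfn γ u * ∫ t in Ioo (-1 : ℝ) 1,
            slm γ f (u, ellMap γ u t) * ∫ x, sl1 γ g (u, ellMap γ u (-x)) ∂ q t
    by_cases hu : u ^ 2 * Real.sin γ ^ 2 < 1
    · congr 1
      refine setIntegral_congr_fun measurableSet_Ioo fun t _ => ?_
      show slm γ f (u, ellMap γ u t) *
          (∫ x, sl1 γ g (u, ellMap γ u (-x)) ∂ q (ellInv γ u (ellMap γ u t))) = _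
      rw [ellInv_ellMap hu]
    · rw [sfn_eq_zero hu, zero_mul, zero_mul]

/-! ### The pivot property `P3` -/

/-- The common reformulation of all three reversibility properties. -/
def P3 (q : Kernel ℝ ℝ) : Prop :=
  ∀ j k : ℝ → ℝ, BddCtsOn (Ioo (-1 : ℝ) 1) j → BddCtsOn (Ioo (-1 : ℝ) 1) k →
    ∫ x in Ioo (-1 : ℝ) 1, k x * ∫ y, j y ∂ q (-x)
      = ∫ x in Ioo (-1 : ℝ) 1, j x * ∫ y, k (-y) ∂ q x

lemma bddCtsOn_neg {j : ℝ → ℝ} (hj : BddCtsOn (Ioo (-1 : ℝ) 1) j) :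
    BddCtsOn (Ioo (-1 : ℝ) 1) fun x => j (-x) := by
  constructor
  · exact hj.1.comp continuous_neg.continuousOn fun x hx => neg_mem_Ioo hx
  · obtain ⟨C, hC⟩ := hj.2
    exact ⟨C, fun x hx => hC _ (neg_mem_Ioo hx)⟩

lemma m1_int (h : ℝ → ℝ) : ∫ x, h x ∂ m1 = 2⁻¹ * ∫ x in Ioo (-1 : ℝ) 1, h x := by
  rw [m1, integral_smul_measure, smul_eq_mul]
  norm_num

lemma rev1_iff_P3 {q : Kernel ℝ ℝ} : Reversible1 q ↔ P3 q := by
  constructor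
  · intro h j k hj hk
    have h1 : ∫ x in Ioo (-1 : ℝ) 1, k x * ∫ y, j y ∂ q (-x)
        = ∫ x in Ioo (-1 : ℝ) 1, k (-x) * ∫ y, j y ∂ q x := by
      have h0 := int_Ioo_neg (fun x => k (-x) * ∫ y, j y ∂ q x)
      simp only [neg_neg] at h0
      exact h0
    rw [h1]
    have h2 := h j (fun x => k (-x)) hj (bddCtsOn_neg hk)
    rw [m1_int, m1_int] at h2
    exact mul_left_cancel₀ (by norm_num : (2⁻¹ : ℝ) ≠ 0) h2
  · intro h j k hj hk
    rw [m1_int, m1_int]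
    congr 1
    have h1 : ∫ x in Ioo (-1 : ℝ) 1, k x * ∫ y, j y ∂ q x
        = ∫ x in Ioo (-1 : ℝ) 1, k (-x) * ∫ y, j y ∂ q (-x) :=
      (int_Ioo_neg fun x => k x * ∫ y, j y ∂ q x).symm
    rw [h1]
    have h2 := h j (fun x => k (-x)) hj (bddCtsOn_neg hk)
    simp only [neg_neg] at h2
    exact h2

lemma dagrev1_iff_P3 {q : Kernel ℝ ℝ} : DagReversible1 (fun x => q (-x)) ↔ P3 q := by
  have hdag : ∀ (k : ℝ → ℝ) (x : ℝ), (∫ y, k y ∂ (dag (fun x => q (-x)) x))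
      = ∫ y, k (-y) ∂ q x := by
    intro k x
    have h0 : dag (fun x => q (-x)) x = Measure.map (fun y : ℝ => -y) (q x) := by
      rw [dag]
      simp only [neg_neg]
    rw [h0, show (fun y : ℝ => -y) = ⇑(MeasurableEquiv.neg ℝ) from rfl, integral_map_equiv]
    rfl
  constructor
  · intro h j k hj hk
    have h2 := h j k hj hk
    rw [m1_int, m1_int] at h2
    simp only [hdag] at h2
    exact mul_left_cancel₀ (by norm_num : (2⁻¹ : ℝ) ≠ 0) h2
  · intro h j k hj hk
    rw [m1_int, m1_int]
    congr 1
    simp only [hdag]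
    exact h j k hj hk

/-! ### Positivity of `∫ sfn` -/

lemma continuous_sfn : Continuous fun u => sfn γ u :=
  Real.continuous_sqrt.comp (by fun_prop)

lemma sfn_integrable (hγ : γ ∈ Ioo 0 Real.pi) : Integrable (fun u => sfn γ u) volume := by
  apply continuous_sfn.integrable_of_hasCompactSupport
  apply HasCompactSupport.intro
    (isCompact_Icc (a := -((Real.sin γ)⁻¹ + 1)) (b := (Real.sin γ)⁻¹ + 1))
  intro u hu
  apply sfn_eq_zero
  have hs := sin_pos hγ
  have hs' : Real.sin γ * (Real.sin γ)⁻¹ = 1 := mul_inv_cancel₀ hs.ne'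
  simp only [mem_Icc, not_and_or, not_le] at hu
  rw [not_lt]
  rcases hu with h | h
  · have h2 : 1 + Real.sin γ ≤ (-u) * Real.sin γ := by nlinarith
    nlinarith [h2, hs]
  · have h2 : 1 + Real.sin γ ≤ u * Real.sin γ := by nlinarith
    nlinarith [h2, hs]

lemma A_pos (hγ : γ ∈ Ioo 0 Real.pi) : 0 < ∫ u, sfn γ u := by
  rw [integral_pos_iff_support_of_nonneg (fun u => sfn_nonneg γ u) (sfn_integrable hγ)]
  have hsub : Ioo (-1 : ℝ) 1 ⊆ Function.support fun u => sfn γ u := by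
    intro u hu
    have h1 : u ^ 2 * Real.sin γ ^ 2 < 1 := by
      nlinarith [Real.sin_sq_le_one γ, hu.1, hu.2, sq_nonneg u, sq_nonneg (Real.sin γ)]
    exact (sfn_pos h1).ne'
  refine lt_of_lt_of_le ?_ (measure_mono hsub)
  rw [Real.volume_Ioo]
  norm_num

/-! ### Bounded continuity of fiber functions -/

lemma continuous_ellMap_x (u : ℝ) : Continuous fun x => ellMap γ u x := by
  unfold ellMap
  fun_prop

lemma bddCtsOn_of_slice {h : ℝ × ℝ → ℝ} {F : ℝ → ℝ × ℝ} {s : ℝ}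
    {f : ℝ × ℝ × ℝ → ℝ} (hf : BddCtsOn (EstarSet γ) f)
    (hh : ∀ p ∈ Eset γ, h p = f (p.1, p.2, s)) (hs : s = 1 ∨ s = -1)
    (hb : ∃ C, ∀ p, |h p| ≤ C)
    (hF : Continuous F) (hmem : ∀ x ∈ Ioo (-1 : ℝ) 1, F x ∈ Eset γ) :
    BddCtsOn (Ioo (-1 : ℝ) 1) fun x => h (F x) := by
  constructor
  · have hc : ContinuousOn (fun x => f ((F x).1, (F x).2, s)) (Ioo (-1 : ℝ) 1) := by
      apply hf.1.comp
      · exact Continuous.continuousOn (by fun_prop)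
      · intro x hx
        exact mem_EstarSet_of (hmem x hx) hs
    apply ContinuousOn.congr hc
    intro x hx
    exact hh _ (hmem x hx)
  · obtain ⟨C, hC⟩ := hb
    exact ⟨C, fun x _ => hC _⟩

lemma bddCtsOn_slm_u {f : ℝ × ℝ × ℝ → ℝ} (hf : BddCtsOn (EstarSet γ) f) {u : ℝ}
    (hu : u ^ 2 * Real.sin γ ^ 2 < 1) :
    BddCtsOn (Ioo (-1 : ℝ) 1) fun x => slm γ f (u, ellMap γ u x) := by
  obtain ⟨C0, hC0⟩ := hf.2
  refine bddCtsOn_of_slice hf (fun p hp => slm_of_mem hp) (Or.inr rfl)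
    ⟨max C0 0, fun p => bound_slm (le_max_right _ _)
      (fun w hw => le_trans (hC0 w hw) (le_max_left _ _)) p⟩
    ((continuous_const.prodMk (continuous_ellMap_x u))) fun x hx => ellMap_mem hu hx

lemma bddCtsOn_sl1_u {f : ℝ × ℝ × ℝ → ℝ} (hf : BddCtsOn (EstarSet γ) f) {u : ℝ}
    (hu : u ^ 2 * Real.sin γ ^ 2 < 1) :
    BddCtsOn (Ioo (-1 : ℝ) 1) fun x => sl1 γ f (u, ellMap γ u x) := by
  obtain ⟨C0, hC0⟩ := hf.2
  refine bddCtsOn_of_slice hf (fun p hp => sl1_of_mem hp) (Or.inl rfl)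
    ⟨max C0 0, fun p => bound_sl1 (le_max_right _ _)
      (fun w hw => le_trans (hC0 w hw) (le_max_left _ _)) p⟩
    ((continuous_const.prodMk (continuous_ellMap_x u))) fun x hx => ellMap_mem hu hx

lemma bddCtsOn_slm_v {f : ℝ × ℝ × ℝ → ℝ} (hf : BddCtsOn (EstarSet γ) f) {v : ℝ}
    (hv : v ^ 2 * Real.sin γ ^ 2 < 1) :
    BddCtsOn (Ioo (-1 : ℝ) 1) fun x => slm γ f (ellMap γ v x, v) := by
  obtain ⟨C0, hC0⟩ := hf.2
  refine bddCtsOn_of_slice hf (fun p hp => slm_of_mem hp) (Or.inr rfl)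
    ⟨max C0 0, fun p => bound_slm (le_max_right _ _)
      (fun w hw => le_trans (hC0 w hw) (le_max_left _ _)) p⟩
    ((continuous_ellMap_x v).prodMk continuous_const)
    fun x hx => swap_mem.mp (by exact ellMap_mem hv hx)

lemma bddCtsOn_sl1_v {f : ℝ × ℝ × ℝ → ℝ} (hf : BddCtsOn (EstarSet γ) f) {v : ℝ}
    (hv : v ^ 2 * Real.sin γ ^ 2 < 1) :
    BddCtsOn (Ioo (-1 : ℝ) 1) fun x => sl1 γ f (ellMap γ v x, v) := by
  obtain ⟨C0, hC0⟩ := hf.2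
  refine bddCtsOn_of_slice hf (fun p hp => sl1_of_mem hp) (Or.inl rfl)
    ⟨max C0 0, fun p => bound_sl1 (le_max_right _ _)
      (fun w hw => le_trans (hC0 w hw) (le_max_left _ _)) p⟩
    ((continuous_ellMap_x v).prodMk continuous_const)
    fun x hx => swap_mem.mp (by exact ellMap_mem hv hx)

/-! ### Bounded continuity of the special test functions -/

lemma bddCtsOn_special {j : ℝ → ℝ} (hj : BddCtsOn (Ioo (-1 : ℝ) 1) j) (a b : ℝ) :
    BddCtsOn (EstarSet γ) fun w : ℝ × ℝ × ℝ =>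
      (a + b * w.2.2) / 2 * j (ellInv γ w.1 w.2.1) := by
  have hι : ContinuousOn (fun w : ℝ × ℝ × ℝ => ellInv γ w.1 w.2.1) (EstarSet γ) := by
    show ContinuousOn (fun w : ℝ × ℝ × ℝ =>
      (w.2.1 + w.1 * Real.cos γ) / Real.sqrt (1 - w.1 ^ 2 * Real.sin γ ^ 2)) (EstarSet γ)
    apply ContinuousOn.div
    · exact Continuous.continuousOn (by fun_prop)
    · exact (Real.continuous_sqrt.comp (by fun_prop)).continuousOn
    · intro w hw
      exact (sfn_pos (good_of_mem hw.1)).ne'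
  constructor
  · apply ContinuousOn.mul
    · exact Continuous.continuousOn (by fun_prop)
    · exact hj.1.comp hι fun w hw => ellInv_mem hw.1
  · obtain ⟨C, hC⟩ := hj.2
    refine ⟨(|a| + |b|) / 2 * max C 0, fun w hw => ?_⟩
    obtain ⟨hE, hs⟩ := hw
    rw [abs_mul]
    apply mul_le_mul
    · have habs : |a + b * w.2.2| ≤ |a| + |b| := by
        rcases hs with hs | hs <;> rw [hs]
        · calc |a + b * 1| = |a + b| := by norm_num
            _ ≤ |a| + |b| := abs_add_le a b
        · calc |a + b * (-1)| = |a - b| := by rw [show a + b * (-1) = a - b from by ring]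
            _ ≤ |a| + |b| := abs_sub a b
      rw [abs_div]
      rw [show |(2:ℝ)| = 2 from by norm_num]
      linarith
    · exact le_trans (hC _ (ellInv_mem hE)) (le_max_left _ _)
    · exact abs_nonneg _
    · positivity

/-! ### Equivalence of `DagReversible2` with `P3` -/

lemma dagrev2_iff_P3 (hγ : γ ∈ Ioo 0 Real.pi) {q : Kernel ℝ ℝ} (hq : IsMarkovOnInterval q) :
    DagReversible2 γ q ↔ P3 q := by
  haveI := hq.1
  constructor
  · intro h j k hj hk
    set f : ℝ × ℝ × ℝ → ℝ :=
      fun w => (1 + (-1) * w.2.2) / 2 * j (ellInv γ w.1 w.2.1) with hfdef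
    set g : ℝ × ℝ × ℝ → ℝ :=
      fun w => (1 + 1 * w.2.2) / 2 * k (ellInv γ w.1 w.2.1) with hgdef
    have hfB : BddCtsOn (EstarSet γ) f := bddCtsOn_special hj 1 (-1)
    have hgB : BddCtsOn (EstarSet γ) g := bddCtsOn_special hk 1 1
    have heq := h f g hfB hgB
    rw [MAIN hγ hq hfB hgB, MAINdag hγ hq hfB hgB] at heq
    have hsl1f : ∀ p : ℝ × ℝ, sl1 γ f p = 0 := by
      intro p
      by_cases hp : p ∈ Eset γ
      · rw [sl1_of_mem hp, hfdef]; norm_num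
      · exact indicator_of_notMem hp _
    have hslmg : ∀ p : ℝ × ℝ, slm γ g p = 0 := by
      intro p
      by_cases hp : p ∈ Eset γ
      · rw [slm_of_mem hp, hgdef]; norm_num
      · exact indicator_of_notMem hp _
    have hslmf : ∀ p ∈ Eset γ, slm γ f p = j (ellInv γ p.1 p.2) := by
      intro p hp; rw [slm_of_mem hp, hfdef]; norm_num
    have hsl1g : ∀ p ∈ Eset γ, sl1 γ g p = k (ellInv γ p.1 p.2) := by
      intro p hp; rw [sl1_of_mem hp, hgdef]; norm_num
    have hX : (∫ u, sfn γ u * ∫ t in Ioo (-1 : ℝ) 1,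
        sl1 γ g (u, ellMap γ u t) * ∫ x, slm γ f (u, ellMap γ u x) ∂ q (-t))
        = (∫ u, sfn γ u) * ∫ t in Ioo (-1 : ℝ) 1, k t * ∫ y, j y ∂ q (-t) := by
      rw [← integral_mul_const]
      refine integral_congr_ae (Filter.Eventually.of_forall fun u => ?_)
      show sfn γ u * (∫ t in Ioo (-1 : ℝ) 1,
          sl1 γ g (u, ellMap γ u t) * ∫ x, slm γ f (u, ellMap γ u x) ∂ q (-t))
        = sfn γ u * ∫ t in Ioo (-1 : ℝ) 1, k t * ∫ y, j y ∂ q (-t)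
      by_cases hu : u ^ 2 * Real.sin γ ^ 2 < 1
      · congr 1
        refine setIntegral_congr_fun measurableSet_Ioo fun t ht => ?_
        have h1 : sl1 γ g (u, ellMap γ u t) = k t := by
          rw [hsl1g _ (ellMap_mem hu ht)]
          show k (ellInv γ u (ellMap γ u t)) = k t
          rw [ellInv_ellMap hu]
        have h2 : (∫ x, slm γ f (u, ellMap γ u x) ∂ q (-t)) = ∫ y, j y ∂ q (-t) := by
          apply integral_congr_ae
          filter_upwards [q_ae_Ioo hq (neg_mem_Ioo ht)] with x hx
          rw [hslmf _ (ellMap_mem hu hx)]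
          show j (ellInv γ u (ellMap γ u x)) = j x
          rw [ellInv_ellMap hu]
        rw [h1, h2]
      · rw [sfn_eq_zero hu, zero_mul, zero_mul]
    have hY : (∫ u, sfn γ u * ∫ t in Ioo (-1 : ℝ) 1,
        slm γ f (u, ellMap γ u t) * ∫ x, sl1 γ g (u, ellMap γ u (-x)) ∂ q t)
        = (∫ u, sfn γ u) * ∫ t in Ioo (-1 : ℝ) 1, j t * ∫ y, k (-y) ∂ q t := by
      rw [← integral_mul_const]
      refine integral_congr_ae (Filter.Eventually.of_forall fun u => ?_)
      show sfn γ u * (∫ t in Ioo (-1 : ℝ) 1,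
          slm γ f (u, ellMap γ u t) * ∫ x, sl1 γ g (u, ellMap γ u (-x)) ∂ q t)
        = sfn γ u * ∫ t in Ioo (-1 : ℝ) 1, j t * ∫ y, k (-y) ∂ q t
      by_cases hu : u ^ 2 * Real.sin γ ^ 2 < 1
      · congr 1
        refine setIntegral_congr_fun measurableSet_Ioo fun t ht => ?_
        have h1 : slm γ f (u, ellMap γ u t) = j t := by
          rw [hslmf _ (ellMap_mem hu ht)]
          show j (ellInv γ u (ellMap γ u t)) = j t
          rw [ellInv_ellMap hu]
        have h2 : (∫ x, sl1 γ g (u, ellMap γ u (-x)) ∂ q t) = ∫ y, k (-y) ∂ q t := by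
          apply integral_congr_ae
          filter_upwards [q_ae_Ioo hq ht] with x hx
          rw [hsl1g _ (ellMap_mem hu (neg_mem_Ioo hx))]
          show k (ellInv γ u (ellMap γ u (-x))) = k (-x)
          rw [ellInv_ellMap hu]
        rw [h1, h2]
      · rw [sfn_eq_zero hu, zero_mul, zero_mul]
    have hT2 : (∫ v, sfn γ v * ∫ t in Ioo (-1 : ℝ) 1,
        slm γ g (ellMap γ v t, v) * ∫ x, sl1 γ f (ellMap γ v x, v) ∂ q (-t)) = 0 := by
      simp [hslmg]
    have hT1' : (∫ v, sfn γ v * ∫ t in Ioo (-1 : ℝ) 1,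
        sl1 γ f (ellMap γ v t, v) * ∫ x, slm γ g (ellMap γ v (-x), v) ∂ q t) = 0 := by
      simp [hsl1f]
    rw [hX, hT2, hY, hT1', add_zero, zero_add] at heq
    have h0 : 0 < (volume (Eset γ)).toReal :=
      ENNReal.toReal_pos (volE_ne_zero hγ) (volE_ne_top hγ)
    have hc : ((volume (Eset γ)).toReal⁻¹ * 2⁻¹ : ℝ) ≠ 0 := by positivity
    have h2 := mul_left_cancel₀ hc heq
    exact mul_left_cancel₀ (A_pos hγ).ne' h2
  · intro hP f g hf hg
    rw [MAIN hγ hq hf hg, MAINdag hγ hq hf hg]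
    congr 1
    have e1 : (∫ u, sfn γ u * ∫ t in Ioo (-1 : ℝ) 1,
        sl1 γ g (u, ellMap γ u t) * ∫ x, slm γ f (u, ellMap γ u x) ∂ q (-t))
        = ∫ u, sfn γ u * ∫ t in Ioo (-1 : ℝ) 1,
            slm γ f (u, ellMap γ u t) * ∫ x, sl1 γ g (u, ellMap γ u (-x)) ∂ q t := by
      refine integral_congr_ae (Filter.Eventually.of_forall fun u => ?_)
      show sfn γ u * (∫ t in Ioo (-1 : ℝ) 1,
          sl1 γ g (u, ellMap γ u t) * ∫ x, slm γ f (u, ellMap γ u x) ∂ q (-t))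
        = sfn γ u * ∫ t in Ioo (-1 : ℝ) 1,
            slm γ f (u, ellMap γ u t) * ∫ x, sl1 γ g (u, ellMap γ u (-x)) ∂ q t
      by_cases hu : u ^ 2 * Real.sin γ ^ 2 < 1
      · congr 1
        exact hP (fun x => slm γ f (u, ellMap γ u x)) (fun t => sl1 γ g (u, ellMap γ u t))
          (bddCtsOn_slm_u hf hu) (bddCtsOn_sl1_u hg hu)
      · rw [sfn_eq_zero hu, zero_mul, zero_mul]
    have e2 : (∫ v, sfn γ v * ∫ t in Ioo (-1 : ℝ) 1,
        slm γ g (ellMap γ v t, v) * ∫ x, sl1 γ f (ellMap γ v x, v) ∂ q (-t))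
        = ∫ v, sfn γ v * ∫ t in Ioo (-1 : ℝ) 1,
            sl1 γ f (ellMap γ v t, v) * ∫ x, slm γ g (ellMap γ v (-x), v) ∂ q t := by
      refine integral_congr_ae (Filter.Eventually.of_forall fun v => ?_)
      show sfn γ v * (∫ t in Ioo (-1 : ℝ) 1,
          slm γ g (ellMap γ v t, v) * ∫ x, sl1 γ f (ellMap γ v x, v) ∂ q (-t))
        = sfn γ v * ∫ t in Ioo (-1 : ℝ) 1,
            sl1 γ f (ellMap γ v t, v) * ∫ x, slm γ g (ellMap γ v (-x), v) ∂ q t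
      by_cases hv : v ^ 2 * Real.sin γ ^ 2 < 1
      · congr 1
        exact hP (fun x => sl1 γ f (ellMap γ v x, v)) (fun t => slm γ g (ellMap γ v t, v))
          (bddCtsOn_sl1_v hf hv) (bddCtsOn_slm_v hg hv)
      · rw [sfn_eq_zero hv, zero_mul, zero_mul]
    rw [e1, e2]
    exact add_comm _ _

end RevAux
/-- `m¹` is reversible for `q` iff `m¹` is `†`-reversible for `q̂` iff
`m²` is `†`-reversible for `Q`. -/
theorem reversibility_equivalence (γ : ℝ) (hγ : γ ∈ Ioo 0 Real.pi)
    (q : Kernel ℝ ℝ) (hq : IsMarkovOnInterval q) :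
    (Reversible1 q ↔ DagReversible1 (fun x => q (-x))) ∧
    (Reversible1 q ↔ DagReversible2 γ q) := by
  have h1 : Reversible1 q ↔ RevAux.P3 q := RevAux.rev1_iff_P3
  have h2 : DagReversible1 (fun x => q (-x)) ↔ RevAux.P3 q := RevAux.dagrev1_iff_P3
  have h3 : DagReversible2 γ q ↔ RevAux.P3 q := RevAux.dagrev2_iff_P3 hγ hq
  exact ⟨h1.trans h2.symm, h1.trans h3.symm⟩
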